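/- arXiv:1809.09908 — 3 statements merged into one kernel-verified Lean document; each statement's English description precedes it below -/
import Mathlib

section
/- Let k ≥ 4 be an integer and let P_k be the path on vertex set [k] with edges {i, i+1} for 0 ≤ i ≤ k−2. Then the packing chromatic number of the generalized Sierpiński graph of P_k of dimension 2 satisfies χρ(S^2_{P_k}) ≥ 4. -/
open SimpleGraph

/-- The generalized Sierpiński graph `S^n_G` of a graph `G` on vertex set `[k]`:
vertices are words of length `n` over `[k]`, and distinct words `u`, `v` are adjacent
iff there is an index `i` such that `u j = v j` for `j < i`, `u i v i` is an edge of `G`,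
and `u j = v i`, `v j = u i` for all `j > i`. -/
def sierpinskiGraph {k : ℕ} (G : SimpleGraph (Fin k)) (n : ℕ) :
    SimpleGraph (Fin n → Fin k) where
  Adj u v := ∃ i : Fin n,
      (∀ j, j < i → u j = v j) ∧ G.Adj (u i) (v i) ∧
      (∀ j, i < j → u j = v i ∧ v j = u i)
  symm := by
    constructor
    rintro u v ⟨i, h1, h2, h3⟩
    exact ⟨i, fun j hj => (h1 j hj).symm, h2.symm,
      fun j hj => ⟨(h3 j hj).2, (h3 j hj).1⟩⟩
  loopless := by
    constructor
    rintro u ⟨i, _, h2, _⟩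
    exact G.loopless.irrefl _ h2

/-- `f` is a packing `c`-coloring of `H`: colors lie in `{1, …, c}` and any two distinct
vertices of the same color `t` are at (extended) distance greater than `t`. -/
def IsPackingColoring {V : Type*} (H : SimpleGraph V) (f : V → ℕ) (c : ℕ) : Prop :=
  (∀ v, 1 ≤ f v ∧ f v ≤ c) ∧
    ∀ u v, u ≠ v → f u = f v → (f u : ℕ∞) < H.edist u v

/-- The packing chromatic number of `H`: the least `c` admitting a packing `c`-coloring. -/
noncomputable def packingChromaticNumber {V : Type*} (H : SimpleGraph V) : ℕ :=
  sInf {c | ∃ f : V → ℕ, IsPackingColoring H f c}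

namespace Stmt3Aux

open SimpleGraph

variable {k : ℕ}

def vv (a b : Fin k) : Fin 2 → Fin k := ![a, b]

lemma vv_inj {a b a' b' : Fin k} (h : vv a b = vv a' b') : a = a' ∧ b = b' := by
  constructor
  · have := congrFun h 0; simpa [vv] using this
  · have := congrFun h 1; simpa [vv] using this

lemma vv_ne₁ {a b a' b' : Fin k} (h : a ≠ a') : vv a b ≠ vv a' b' :=
  fun he => h (vv_inj he).1

lemma vv_ne₂ {a b b' : Fin k} (h : b ≠ b') : vv a b ≠ vv a b' :=
  fun he => h (vv_inj he).2

lemma adj_snd {G : SimpleGraph (Fin k)} {a b b' : Fin k} (h : G.Adj b b') :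
    (sierpinskiGraph G 2).Adj (vv a b) (vv a b') := by
  refine ⟨1, fun j hj => ?_, by simpa [vv] using h, fun j hj => ?_⟩
  · fin_cases j
    · rfl
    · exact absurd hj (by decide)
  · exact absurd hj (by fin_cases j <;> decide)

lemma adj_swap {G : SimpleGraph (Fin k)} {a b : Fin k} (h : G.Adj a b) :
    (sierpinskiGraph G 2).Adj (vv a b) (vv b a) := by
  refine ⟨0, fun j hj => ?_, by simpa [vv] using h, fun j hj => ?_⟩
  · exact absurd hj (by fin_cases j <;> decide)
  · fin_cases j
    · exact absurd hj (by decide)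
    · exact ⟨rfl, rfl⟩

lemma edist_le1 {V : Type*} {H : SimpleGraph V} {u v : V} (h : H.Adj u v) :
    H.edist u v ≤ 1 :=
  (SimpleGraph.edist_eq_one_iff_adj.mpr h).le

lemma edist_le2 {V : Type*} {H : SimpleGraph V} {u v w : V}
    (h1 : H.Adj u v) (h2 : H.Adj v w) : H.edist u w ≤ 2 := by
  simpa using SimpleGraph.Walk.edist_le (Walk.cons h1 (Walk.cons h2 Walk.nil))

lemma edist_le3 {V : Type*} {H : SimpleGraph V} {u v w x : V}
    (h1 : H.Adj u v) (h2 : H.Adj v w) (h3 : H.Adj w x) : H.edist u x ≤ 3 := by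
  simpa using SimpleGraph.Walk.edist_le (Walk.cons h1 (Walk.cons h2 (Walk.cons h3 Walk.nil)))

lemma key {V : Type*} {H : SimpleGraph V} {f : V → ℕ} {c : ℕ}
    (hf : IsPackingColoring H f c) {u v : V} {t : ℕ}
    (hne : u ≠ v) (hd : H.edist u v ≤ (t : ℕ∞)) (he : f u = f v) : f u < t := by
  have h1 := hf.2 u v hne he
  have h2 : (f u : ℕ∞) < (t : ℕ∞) := lt_of_lt_of_le h1 hd
  exact_mod_cast h2

end Stmt3Aux

open Stmt3Aux in
set_option maxHeartbeats 1000000 in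
theorem stmt3 (k : ℕ) (hk : 4 ≤ k) :
    4 ≤ packingChromaticNumber (sierpinskiGraph (SimpleGraph.pathGraph k) 2) := by
  unfold packingChromaticNumber
  apply le_csInf
  · -- nonempty: color every vertex with a distinct color
    refine ⟨Fintype.card (Fin 2 → Fin k), fun v => (Fintype.equivFin _ v).val + 1, ?_, ?_⟩
    · intro v
      exact ⟨Nat.succ_le_succ (Nat.zero_le _), (Fintype.equivFin _ v).isLt⟩
    · intro u v hne he
      exfalso
      apply hne
      apply (Fintype.equivFin (Fin 2 → Fin k)).injective
      have he' : ((Fintype.equivFin (Fin 2 → Fin k)) u).val + 1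
          = ((Fintype.equivFin (Fin 2 → Fin k)) v).val + 1 := he
      exact Fin.ext (by omega)
  · rintro c ⟨f, hf⟩
    by_contra hlt
    push_neg at hlt
    have hc3 : c ≤ 3 := by omega
    set H := sierpinskiGraph (SimpleGraph.pathGraph k) 2 with hH
    -- vertices of Fin k
    have h0 : 0 < k := by omega
    have h1 : 1 < k := by omega
    have h2 : 2 < k := by omega
    have h3 : 3 < k := by omega
    set n0 : Fin k := ⟨0, h0⟩
    set n1 : Fin k := ⟨1, h1⟩
    set n2 : Fin k := ⟨2, h2⟩
    set n3 : Fin k := ⟨3, h3⟩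
    have hne01 : n0 ≠ n1 := Fin.ne_of_val_ne (by decide : (0:ℕ) ≠ 1)
    have hne02 : n0 ≠ n2 := Fin.ne_of_val_ne (by decide : (0:ℕ) ≠ 2)
    have hne03 : n0 ≠ n3 := Fin.ne_of_val_ne (by decide : (0:ℕ) ≠ 3)
    have hne12 : n1 ≠ n2 := Fin.ne_of_val_ne (by decide : (1:ℕ) ≠ 2)
    have hne13 : n1 ≠ n3 := Fin.ne_of_val_ne (by decide : (1:ℕ) ≠ 3)
    have hne23 : n2 ≠ n3 := Fin.ne_of_val_ne (by decide : (2:ℕ) ≠ 3)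
    -- path edges
    have a01 : (SimpleGraph.pathGraph k).Adj n0 n1 := SimpleGraph.pathGraph_adj.mpr (Or.inl rfl)
    have a12 : (SimpleGraph.pathGraph k).Adj n1 n2 := SimpleGraph.pathGraph_adj.mpr (Or.inl rfl)
    have a23 : (SimpleGraph.pathGraph k).Adj n2 n3 := SimpleGraph.pathGraph_adj.mpr (Or.inl rfl)
    -- sierpinski edges
    have e1001 : H.Adj (vv n1 n0) (vv n1 n1) := adj_snd a01
    have e1112 : H.Adj (vv n1 n1) (vv n1 n2) := adj_snd a12
    have e1213 : H.Adj (vv n1 n2) (vv n1 n3) := adj_snd a23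
    have e2021 : H.Adj (vv n2 n0) (vv n2 n1) := adj_snd a01
    have e2122 : H.Adj (vv n2 n1) (vv n2 n2) := adj_snd a12
    have e2223 : H.Adj (vv n2 n2) (vv n2 n3) := adj_snd a23
    have eswap : H.Adj (vv n1 n2) (vv n2 n1) := adj_swap a12
    -- range facts
    have r0 := hf.1 (vv n1 n0)
    have r1 := hf.1 (vv n1 n1)
    have r2 := hf.1 (vv n1 n2)
    have r3 := hf.1 (vv n1 n3)
    have r4 := hf.1 (vv n2 n0)
    have r5 := hf.1 (vv n2 n1)
    have r6 := hf.1 (vv n2 n2)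
    have r7 := hf.1 (vv n2 n3)
    -- distance constraints
    have c0 : f (vv n1 n0) = f (vv n1 n1) → f (vv n1 n0) < 1 :=
      key hf (vv_ne₂ hne01) (edist_le1 e1001)
    have c1 : f (vv n1 n0) = f (vv n1 n2) → f (vv n1 n0) < 2 :=
      key hf (vv_ne₂ hne02) (edist_le2 e1001 e1112)
    have c2 : f (vv n1 n0) = f (vv n2 n1) → f (vv n1 n0) < 3 :=
      key hf (vv_ne₁ hne12) (edist_le3 e1001 e1112 eswap)
    have c3 : f (vv n1 n1) = f (vv n1 n2) → f (vv n1 n1) < 1 :=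
      key hf (vv_ne₂ hne12) (edist_le1 e1112)
    have c4 : f (vv n1 n1) = f (vv n1 n3) → f (vv n1 n1) < 2 :=
      key hf (vv_ne₂ hne13) (edist_le2 e1112 e1213)
    have c5 : f (vv n1 n1) = f (vv n2 n1) → f (vv n1 n1) < 2 :=
      key hf (vv_ne₁ hne12) (edist_le2 e1112 eswap)
    have c6 : f (vv n1 n2) = f (vv n1 n3) → f (vv n1 n2) < 1 :=
      key hf (vv_ne₂ hne23) (edist_le1 e1213)
    have c7 : f (vv n1 n2) = f (vv n2 n0) → f (vv n1 n2) < 2 :=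
      key hf (vv_ne₁ hne12) (edist_le2 eswap e2021.symm)
    have c8 : f (vv n1 n2) = f (vv n2 n1) → f (vv n1 n2) < 1 :=
      key hf (vv_ne₁ hne12) (edist_le1 eswap)
    have c9 : f (vv n1 n2) = f (vv n2 n2) → f (vv n1 n2) < 2 :=
      key hf (vv_ne₁ hne12) (edist_le2 eswap e2122)
    have c10 : f (vv n1 n2) = f (vv n2 n3) → f (vv n1 n2) < 3 :=
      key hf (vv_ne₁ hne12) (edist_le3 eswap e2122 e2223)
    have c11 : f (vv n1 n3) = f (vv n2 n1) → f (vv n1 n3) < 2 :=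
      key hf (vv_ne₁ hne12) (edist_le2 e1213.symm eswap)
    have c12 : f (vv n2 n0) = f (vv n2 n1) → f (vv n2 n0) < 1 :=
      key hf (vv_ne₂ hne01) (edist_le1 e2021)
    have c13 : f (vv n2 n0) = f (vv n2 n2) → f (vv n2 n0) < 2 :=
      key hf (vv_ne₂ hne02) (edist_le2 e2021 e2122)
    have c14 : f (vv n2 n1) = f (vv n2 n2) → f (vv n2 n1) < 1 :=
      key hf (vv_ne₂ hne12) (edist_le1 e2122)
    have c15 : f (vv n2 n1) = f (vv n2 n3) → f (vv n2 n1) < 2 :=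
      key hf (vv_ne₂ hne13) (edist_le2 e2122 e2223)
    have c16 : f (vv n2 n2) = f (vv n2 n3) → f (vv n2 n2) < 1 :=
      key hf (vv_ne₂ hne23) (edist_le1 e2223)
    obtain ⟨l0, u0⟩ := r0; obtain ⟨l1, u1⟩ := r1; obtain ⟨l2, u2⟩ := r2
    obtain ⟨l3, u3⟩ := r3; obtain ⟨l4, u4⟩ := r4; obtain ⟨l5, u5⟩ := r5
    obtain ⟨l6, u6⟩ := r6; obtain ⟨l7, u7⟩ := r7
    omega
end

section
/- Let k ≥ 3 be an integer and let S^2_{P_k} be the generalized Sierpiński graph of the path P_k of dimension 2. Then χρ(S^2_{P_3}) = 3, and χρ(S^2_{P_k}) = 4 for every k ≥ 4. -/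
open SimpleGraph

namespace Stmt5Aux

abbrev SG (k : ℕ) := sierpinskiGraph (SimpleGraph.pathGraph k) 2

def padj (x y : ℕ) : Prop := x + 1 = y ∨ y + 1 = x

lemma adj_iff {k : ℕ} {u v : Fin 2 → Fin k} :
    (SG k).Adj u v ↔
      ((u 0 = v 0 ∧ padj (u 1).val (v 1).val) ∨
       (padj (u 0).val (v 0).val ∧ u 1 = v 0 ∧ v 1 = u 0)) := by
  constructor
  · rintro ⟨i, h1, h2, h3⟩
    fin_cases i
    · right
      refine ⟨?_, (h3 1 (by decide)).1, (h3 1 (by decide)).2⟩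
      simpa [padj, SimpleGraph.pathGraph_adj] using h2
    · left
      refine ⟨h1 0 (by decide), ?_⟩
      simpa [padj, SimpleGraph.pathGraph_adj] using h2
  · rintro (⟨h0, h1⟩ | ⟨h0, h1, h2⟩)
    · refine ⟨1, ?_, ?_, ?_⟩
      · intro j hj
        fin_cases j
        · exact h0
        · exact absurd hj (by simp)
      · rw [SimpleGraph.pathGraph_adj]; exact h1
      · intro j hj
        fin_cases j <;> simp_all [Fin.lt_def]
    · refine ⟨0, ?_, ?_, ?_⟩
      · intro j hj
        exact absurd hj (by simp [Fin.lt_def])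
      · rw [SimpleGraph.pathGraph_adj]; exact h0
      · intro j hj
        fin_cases j
        · exact absurd hj (by simp [Fin.lt_def])
        · exact ⟨h1, h2⟩

/-! ### Distance lower bounds -/

def ab (x y : ℕ) : ℕ := (x - y) + (y - x)

def Dnat (a x c z : ℕ) : ℕ :=
  if a = c then ab x z
  else if a < c then ab x (a+1) + ab z (c-1) + (3*(c-a) - 2)
  else ab z (c+1) + ab x (a-1) + (3*(a-c) - 2)

lemma lip1 (a x c z z' : ℕ) (h : padj z z') : Dnat a x c z' ≤ Dnat a x c z + 1 := by
  unfold Dnat ab; unfold padj at h; split_ifs <;> omega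

lemma lip2 (a x c z : ℕ) (h : padj c z) : Dnat a x z c ≤ Dnat a x c z + 1 := by
  unfold Dnat ab; unfold padj at h; split_ifs <;> omega

lemma Dnat_self (a x : ℕ) : Dnat a x a x = 0 := by
  unfold Dnat ab; split_ifs <;> omega

def D {k : ℕ} (u v : Fin 2 → Fin k) : ℕ := Dnat (u 0).val (u 1).val (v 0).val (v 1).val

lemma lipD {k : ℕ} (u v w : Fin 2 → Fin k) (h : (SG k).Adj v w) : D u w ≤ D u v + 1 := by
  rcases adj_iff.1 h with ⟨h0, h1⟩ | ⟨h0, h1, h2⟩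
  · have : (v 0).val = (w 0).val := by rw [h0]
    unfold D; rw [← this]
    exact lip1 _ _ _ _ _ h1
  · unfold D
    have e1 : (w 0).val = (v 1).val := by rw [← h1]
    have e2 : (w 1).val = (v 0).val := by rw [h2]
    rw [e1] at h0
    rw [e1, e2]
    exact lip2 _ _ _ _ h0

lemma D_le_len {k : ℕ} (u : Fin 2 → Fin k) :
    ∀ {v w : Fin 2 → Fin k} (p : (SG k).Walk v w), D u w ≤ D u v + p.length := by
  intro v w p
  induction p with
  | nil => simp
  | @cons a b c hadj q ih =>
      have := lipD u a b hadj
      simp only [SimpleGraph.Walk.length_cons]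
      omega

lemma D_le_edist {k : ℕ} (u v : Fin 2 → Fin k) :
    (D u v : ℕ∞) ≤ (SG k).edist u v := by
  refine le_iInf fun p => ?_
  have h := D_le_len u (v := u) (w := v) p
  have h0 : D u u = 0 := Dnat_self _ _
  rw [h0] at h
  simp only [Nat.zero_add] at h
  exact_mod_cast h

lemma ne_vals {k : ℕ} {u v : Fin 2 → Fin k} (h : u ≠ v) :
    ¬((u 0).val = (v 0).val ∧ (u 1).val = (v 1).val) := by
  rintro ⟨h0, h1⟩
  exact h (funext fun j => by fin_cases j <;> [exact Fin.ext h0; exact Fin.ext h1])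

/-! ### The colorings -/

def col (a b : ℕ) : ℕ :=
  if b % 2 = 0 then 1
  else if a % 2 = 0 then (if (b + 3*a) % 4 = 1 then 3 else 2)
  else if b = a then 4
  else if a < b then (if (b - a) % 4 = 2 then 3 else 2)
  else (if (a - b) % 4 = 0 then 3 else 2)

lemma col_bounds (a b : ℕ) : 1 ≤ col a b ∧ col a b ≤ 4 := by
  unfold col; split_ifs <;> omega

set_option maxHeartbeats 4000000 in
lemma col_lt (a x c z : ℕ) (hne : ¬(a = c ∧ x = z)) (he : col a x = col c z) :
    col a x < Dnat a x c z := by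
  unfold col Dnat ab at *
  split_ifs at * <;> omega

def col3 (a b : ℕ) : ℕ := if b % 2 = 0 then 1 else if a = 1 then 3 else 2

lemma col3_bounds (a b : ℕ) : 1 ≤ col3 a b ∧ col3 a b ≤ 3 := by
  unfold col3; split_ifs <;> omega

lemma col3_lt (a x c z : ℕ) (ha : a < 3) (hx : x < 3) (hc : c < 3) (hz : z < 3)
    (hne : ¬(a = c ∧ x = z)) (he : col3 a x = col3 c z) :
    col3 a x < Dnat a x c z := by
  unfold col3 Dnat ab at *
  split_ifs at * <;> omega

lemma upper4 (k : ℕ) :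
    IsPackingColoring (SG k) (fun u => col (u 0).val (u 1).val) 4 := by
  constructor
  · exact fun v => col_bounds _ _
  · intro u v hne he
    have hD := col_lt (u 0).val (u 1).val (v 0).val (v 1).val (ne_vals hne) he
    refine lt_of_lt_of_le ?_ (D_le_edist u v)
    exact_mod_cast hD

lemma upper3 :
    IsPackingColoring (SG 3) (fun u => col3 (u 0).val (u 1).val) 3 := by
  constructor
  · exact fun v => col3_bounds _ _
  · intro u v hne he
    have hD := col3_lt (u 0).val (u 1).val (v 0).val (v 1).val
      (u 0).isLt (u 1).isLt (v 0).isLt (v 1).isLt (ne_vals hne) he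
    refine lt_of_lt_of_le ?_ (D_le_edist u v)
    exact_mod_cast hD

/-! ### Distance upper bounds via explicit walks -/

abbrev vv (k i j : ℕ) (hi : i < k) (hj : j < k) : Fin 2 → Fin k := ![⟨i, hi⟩, ⟨j, hj⟩]

lemma vne {k i j i' j' : ℕ} {hi hj hi' hj'} (h : ¬(i = i' ∧ j = j')) :
    vv k i j hi hj ≠ vv k i' j' hi' hj' := by
  intro he
  have h0 := congrFun he 0
  have h1 := congrFun he 1
  simp only [vv, Matrix.cons_val_zero, Matrix.cons_val_one, Matrix.head_cons, Fin.mk.injEq] at h0 h1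
  exact h ⟨h0, h1⟩

lemma adjH {k : ℕ} {a x y : Fin k} (h : padj x.val y.val) :
    (SG k).Adj ![a, x] ![a, y] := by
  refine adj_iff.2 (Or.inl ⟨rfl, ?_⟩)
  simpa using h

lemma adjB {k : ℕ} {a c : Fin k} (h : padj a.val c.val) :
    (SG k).Adj ![a, c] ![c, a] := by
  refine adj_iff.2 (Or.inr ⟨?_, ?_, ?_⟩) <;> simpa using h

lemma e1 {k : ℕ} {u v : Fin 2 → Fin k} (h : (SG k).Adj u v) :
    (SG k).edist u v ≤ ((1 : ℕ) : ℕ∞) := by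
  simpa using SimpleGraph.edist_le h.toWalk

lemma e2 {k : ℕ} {u v w : Fin 2 → Fin k} (h1 : (SG k).Adj u v) (h2 : (SG k).Adj v w) :
    (SG k).edist u w ≤ ((2 : ℕ) : ℕ∞) := by
  refine le_trans (SimpleGraph.edist_triangle (v := v)) (le_trans (add_le_add (e1 h1) (e1 h2)) ?_)
  norm_num

lemma e3 {k : ℕ} {u v w x : Fin 2 → Fin k} (h1 : (SG k).Adj u v) (h2 : (SG k).Adj v w)
    (h3 : (SG k).Adj w x) :
    (SG k).edist u x ≤ ((3 : ℕ) : ℕ∞) := by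
  refine le_trans (SimpleGraph.edist_triangle (v := v)) (le_trans (add_le_add (e1 h1) (e2 h2 h3)) ?_)
  norm_num

lemma key_lt {k : ℕ} {f : (Fin 2 → Fin k) → ℕ} {c : ℕ}
    (hf : IsPackingColoring (SG k) f c) (u v : Fin 2 → Fin k) (d : ℕ)
    (hne : u ≠ v) (hd : (SG k).edist u v ≤ (d : ℕ∞)) (he : f u = f v) : f u < d := by
  have h2 := hf.2 u v hne he
  exact ENat.coe_lt_coe.mp (lt_of_lt_of_le h2 hd)

set_option maxHeartbeats 8000000 in
lemma no3 {k : ℕ} (hk : 4 ≤ k) (f : (Fin 2 → Fin k) → ℕ)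
    (hf : IsPackingColoring (SG k) f 3) : False := by
  have p0 : (0:ℕ) < k := by omega
  have p1 : (1:ℕ) < k := by omega
  have p2 : (2:ℕ) < k := by omega
  have p3 : (3:ℕ) < k := by omega
  have key : ∀ (u v : Fin 2 → Fin k) (d : ℕ), u ≠ v → (SG k).edist u v ≤ (d : ℕ∞) →
      (f u = f v → f u < d) := fun u v d hne hd he => key_lt hf u v d hne hd he
  have h10_11 := key (vv k 1 0 p1 p0) (vv k 1 1 p1 p1) 1 (vne (by omega)) (e1 (adjH (Or.inl rfl) : (SG k).Adj (vv k 1 0 p1 p0) (vv k 1 1 p1 p1)))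
  have h10_12 := key (vv k 1 0 p1 p0) (vv k 1 2 p1 p2) 2 (vne (by omega)) (e2 (adjH (Or.inl rfl) : (SG k).Adj (vv k 1 0 p1 p0) (vv k 1 1 p1 p1)) (adjH (Or.inl rfl) : (SG k).Adj (vv k 1 1 p1 p1) (vv k 1 2 p1 p2)))
  have h10_21 := key (vv k 1 0 p1 p0) (vv k 2 1 p2 p1) 3 (vne (by omega)) (e3 (adjH (Or.inl rfl) : (SG k).Adj (vv k 1 0 p1 p0) (vv k 1 1 p1 p1)) (adjH (Or.inl rfl) : (SG k).Adj (vv k 1 1 p1 p1) (vv k 1 2 p1 p2)) (adjB (Or.inl rfl) : (SG k).Adj (vv k 1 2 p1 p2) (vv k 2 1 p2 p1)))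
  have h11_12 := key (vv k 1 1 p1 p1) (vv k 1 2 p1 p2) 1 (vne (by omega)) (e1 (adjH (Or.inl rfl) : (SG k).Adj (vv k 1 1 p1 p1) (vv k 1 2 p1 p2)))
  have h11_13 := key (vv k 1 1 p1 p1) (vv k 1 3 p1 p3) 2 (vne (by omega)) (e2 (adjH (Or.inl rfl) : (SG k).Adj (vv k 1 1 p1 p1) (vv k 1 2 p1 p2)) (adjH (Or.inl rfl) : (SG k).Adj (vv k 1 2 p1 p2) (vv k 1 3 p1 p3)))
  have h11_21 := key (vv k 1 1 p1 p1) (vv k 2 1 p2 p1) 2 (vne (by omega)) (e2 (adjH (Or.inl rfl) : (SG k).Adj (vv k 1 1 p1 p1) (vv k 1 2 p1 p2)) (adjB (Or.inl rfl) : (SG k).Adj (vv k 1 2 p1 p2) (vv k 2 1 p2 p1)))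
  have h12_13 := key (vv k 1 2 p1 p2) (vv k 1 3 p1 p3) 1 (vne (by omega)) (e1 (adjH (Or.inl rfl) : (SG k).Adj (vv k 1 2 p1 p2) (vv k 1 3 p1 p3)))
  have h12_20 := key (vv k 1 2 p1 p2) (vv k 2 0 p2 p0) 2 (vne (by omega)) (e2 (adjB (Or.inl rfl) : (SG k).Adj (vv k 1 2 p1 p2) (vv k 2 1 p2 p1)) ((adjH (Or.inl rfl) : (SG k).Adj (vv k 2 0 p2 p0) (vv k 2 1 p2 p1)).symm))
  have h12_21 := key (vv k 1 2 p1 p2) (vv k 2 1 p2 p1) 1 (vne (by omega)) (e1 (adjB (Or.inl rfl) : (SG k).Adj (vv k 1 2 p1 p2) (vv k 2 1 p2 p1)))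
  have h12_22 := key (vv k 1 2 p1 p2) (vv k 2 2 p2 p2) 2 (vne (by omega)) (e2 (adjB (Or.inl rfl) : (SG k).Adj (vv k 1 2 p1 p2) (vv k 2 1 p2 p1)) (adjH (Or.inl rfl) : (SG k).Adj (vv k 2 1 p2 p1) (vv k 2 2 p2 p2)))
  have h12_23 := key (vv k 1 2 p1 p2) (vv k 2 3 p2 p3) 3 (vne (by omega)) (e3 (adjB (Or.inl rfl) : (SG k).Adj (vv k 1 2 p1 p2) (vv k 2 1 p2 p1)) (adjH (Or.inl rfl) : (SG k).Adj (vv k 2 1 p2 p1) (vv k 2 2 p2 p2)) (adjH (Or.inl rfl) : (SG k).Adj (vv k 2 2 p2 p2) (vv k 2 3 p2 p3)))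
  have h13_21 := key (vv k 1 3 p1 p3) (vv k 2 1 p2 p1) 2 (vne (by omega)) (e2 ((adjH (Or.inl rfl) : (SG k).Adj (vv k 1 2 p1 p2) (vv k 1 3 p1 p3)).symm) (adjB (Or.inl rfl) : (SG k).Adj (vv k 1 2 p1 p2) (vv k 2 1 p2 p1)))
  have h20_21 := key (vv k 2 0 p2 p0) (vv k 2 1 p2 p1) 1 (vne (by omega)) (e1 (adjH (Or.inl rfl) : (SG k).Adj (vv k 2 0 p2 p0) (vv k 2 1 p2 p1)))
  have h20_22 := key (vv k 2 0 p2 p0) (vv k 2 2 p2 p2) 2 (vne (by omega)) (e2 (adjH (Or.inl rfl) : (SG k).Adj (vv k 2 0 p2 p0) (vv k 2 1 p2 p1)) (adjH (Or.inl rfl) : (SG k).Adj (vv k 2 1 p2 p1) (vv k 2 2 p2 p2)))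
  have h21_22 := key (vv k 2 1 p2 p1) (vv k 2 2 p2 p2) 1 (vne (by omega)) (e1 (adjH (Or.inl rfl) : (SG k).Adj (vv k 2 1 p2 p1) (vv k 2 2 p2 p2)))
  have h21_23 := key (vv k 2 1 p2 p1) (vv k 2 3 p2 p3) 2 (vne (by omega)) (e2 (adjH (Or.inl rfl) : (SG k).Adj (vv k 2 1 p2 p1) (vv k 2 2 p2 p2)) (adjH (Or.inl rfl) : (SG k).Adj (vv k 2 2 p2 p2) (vv k 2 3 p2 p3)))
  have h22_23 := key (vv k 2 2 p2 p2) (vv k 2 3 p2 p3) 1 (vne (by omega)) (e1 (adjH (Or.inl rfl) : (SG k).Adj (vv k 2 2 p2 p2) (vv k 2 3 p2 p3)))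
  have b10 := hf.1 (vv k 1 0 p1 p0)
  have b11 := hf.1 (vv k 1 1 p1 p1)
  have b12 := hf.1 (vv k 1 2 p1 p2)
  have b13 := hf.1 (vv k 1 3 p1 p3)
  have b20 := hf.1 (vv k 2 0 p2 p0)
  have b21 := hf.1 (vv k 2 1 p2 p1)
  have b22 := hf.1 (vv k 2 2 p2 p2)
  have b23 := hf.1 (vv k 2 3 p2 p3)
  omega

lemma no2 {k : ℕ} (hk : 3 ≤ k) (f : (Fin 2 → Fin k) → ℕ)
    (hf : IsPackingColoring (SG k) f 2) : False := by
  have p0 : (0:ℕ) < k := by omega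
  have p1 : (1:ℕ) < k := by omega
  have key : ∀ (u v : Fin 2 → Fin k) (d : ℕ), u ≠ v → (SG k).edist u v ≤ (d : ℕ∞) →
      (f u = f v → f u < d) := fun u v d hne hd he => key_lt hf u v d hne hd he
  have a1 : (SG k).Adj (vv k 0 0 p0 p0) (vv k 0 1 p0 p1) := adjH (Or.inl rfl)
  have a2 : (SG k).Adj (vv k 0 1 p0 p1) (vv k 1 0 p1 p0) := adjB (Or.inl rfl)
  have a3 : (SG k).Adj (vv k 1 0 p1 p0) (vv k 1 1 p1 p1) := adjH (Or.inl rfl)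
  have h1 := key (vv k 0 0 p0 p0) (vv k 0 1 p0 p1) 1 (vne (by omega)) (e1 a1)
  have h2 := key (vv k 0 1 p0 p1) (vv k 1 0 p1 p0) 1 (vne (by omega)) (e1 a2)
  have h3 := key (vv k 1 0 p1 p0) (vv k 1 1 p1 p1) 1 (vne (by omega)) (e1 a3)
  have h4 := key (vv k 0 0 p0 p0) (vv k 1 0 p1 p0) 2 (vne (by omega)) (e2 a1 a2)
  have h5 := key (vv k 0 1 p0 p1) (vv k 1 1 p1 p1) 2 (vne (by omega)) (e2 a2 a3)
  have b1 := hf.1 (vv k 0 0 p0 p0)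
  have b2 := hf.1 (vv k 0 1 p0 p1)
  have b3 := hf.1 (vv k 1 0 p1 p0)
  have b4 := hf.1 (vv k 1 1 p1 p1)
  omega

lemma pcn_eq {k m : ℕ} (hm : 1 ≤ m)
    (hex : ∃ f, IsPackingColoring (SG k) f m)
    (hno : ∀ f, ¬ IsPackingColoring (SG k) f (m - 1)) :
    packingChromaticNumber (SG k) = m := by
  have hmem : m ∈ {c | ∃ f : (Fin 2 → Fin k) → ℕ, IsPackingColoring (SG k) f c} := hex
  refine le_antisymm (Nat.sInf_le hmem) (le_csInf ⟨m, hmem⟩ ?_)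
  rintro c ⟨f, hf⟩
  by_contra hlt
  push_neg at hlt
  exact hno f ⟨fun v => ⟨(hf.1 v).1, by have := (hf.1 v).2; omega⟩, hf.2⟩

end Stmt5Aux

theorem stmt5 :
    packingChromaticNumber (sierpinskiGraph (SimpleGraph.pathGraph 3) 2) = 3 ∧
    ∀ k : ℕ, 4 ≤ k →
      packingChromaticNumber (sierpinskiGraph (SimpleGraph.pathGraph k) 2) = 4 := by
  constructor
  · refine Stmt5Aux.pcn_eq (by norm_num) ⟨_, Stmt5Aux.upper3⟩ ?_
    intro f hf
    exact Stmt5Aux.no2 (by norm_num) f hf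
  · intro k hk
    refine Stmt5Aux.pcn_eq (by norm_num) ⟨_, Stmt5Aux.upper4 k⟩ ?_
    intro f hf
    exact Stmt5Aux.no3 hk f hf
end

section
/- Let G be a simple graph with vertex set [k] and let n ≥ 2. For every j ∈ [k] and all vertices u, v of the generalized Sierpiński graph S^{n−1}_G, the shortest-path distance between the corresponding vertices ju and jv in S^n_G equals the shortest-path distance between u and v in S^{n−1}_G: d_{S^{n−1}_G}(u, v) = d_{S^n_G}(ju, jv). -/
open SimpleGraph

namespace SierpAux

variable {k : ℕ} {G : SimpleGraph (Fin k)} {m : ℕ}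

/-- Connectivity with a length budget. -/
def Conn (G : SimpleGraph (Fin k)) (m : ℕ) (a b : Fin m → Fin k) (L : ℕ) : Prop :=
  ∃ Q : (sierpinskiGraph G m).Walk a b, Q.length ≤ L

lemma conn_of_eq {a b : Fin m → Fin k} {L : ℕ} (h : a = b) : Conn G m a b L := by
  subst h; exact ⟨SimpleGraph.Walk.nil, by simp⟩

lemma Conn.mono {a b : Fin m → Fin k} {L L' : ℕ} (h : L ≤ L') (hc : Conn G m a b L) :
    Conn G m a b L' := by
  obtain ⟨Q, hQ⟩ := hc; exact ⟨Q, hQ.trans h⟩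

lemma Conn.trans {a b c : Fin m → Fin k} {L1 L2 : ℕ} (h1 : Conn G m a b L1)
    (h2 : Conn G m b c L2) : Conn G m a c (L1 + L2) := by
  obtain ⟨Q1, hQ1⟩ := h1; obtain ⟨Q2, hQ2⟩ := h2
  exact ⟨Q1.append Q2, by rw [SimpleGraph.Walk.length_append]; omega⟩

lemma Conn.cons {a b c : Fin m → Fin k} {L : ℕ} (h : (sierpinskiGraph G m).Adj a b)
    (hc : Conn G m b c L) : Conn G m a c (L + 1) := by
  obtain ⟨Q, hQ⟩ := hc
  exact ⟨SimpleGraph.Walk.cons h Q, by rw [SimpleGraph.Walk.length_cons]; omega⟩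

lemma conn_left {a a' b : Fin m → Fin k} {L : ℕ} (h : a = a') (hc : Conn G m a b L) :
    Conn G m a' b L := h ▸ hc

/-- An edge whose endpoints share the first letter projects to an edge of tails. -/
lemma adj_tail {u v : Fin (m + 1) → Fin k} (h : (sierpinskiGraph G (m + 1)).Adj u v)
    (h0 : u 0 = v 0) : (sierpinskiGraph G m).Adj (Fin.tail u) (Fin.tail v) := by
  obtain ⟨i, h1, h2, h3⟩ := h
  have hi : i ≠ 0 := by
    rintro rfl
    rw [h0] at h2
    exact G.loopless.irrefl _ h2
  obtain ⟨i', rfl⟩ : ∃ i', i = Fin.succ i' := ⟨i.pred hi, (Fin.succ_pred i hi).symm⟩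
  refine ⟨i', fun t ht => h1 t.succ (by simpa using ht), h2, fun t ht => h3 t.succ (by simpa using ht)⟩

/-- A "crossing" edge: the endpoints differ in the first letter. -/
lemma adj_cross {u v : Fin (m + 1) → Fin k} (h : (sierpinskiGraph G (m + 1)).Adj u v)
    (h0 : u 0 ≠ v 0) :
    G.Adj (u 0) (v 0) ∧ ∀ t : Fin m, u t.succ = v 0 ∧ v t.succ = u 0 := by
  obtain ⟨i, h1, h2, h3⟩ := h
  have hi : i = 0 := by
    by_contra hne
    exact h0 (h1 0 (Fin.pos_of_ne_zero hne))
  subst hi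
  exact ⟨h2, fun t => h3 t.succ t.succ_pos⟩

/-- Prepending a letter preserves adjacency. -/
lemma adj_cons (j : Fin k) {a b : Fin m → Fin k} (h : (sierpinskiGraph G m).Adj a b) :
    (sierpinskiGraph G (m + 1)).Adj (Fin.cons j a) (Fin.cons j b) := by
  obtain ⟨i, h1, h2, h3⟩ := h
  refine ⟨i.succ, ?_, by simpa using h2, ?_⟩
  · intro t ht
    rcases Fin.eq_zero_or_eq_succ t with rfl | ⟨s, rfl⟩
    · simp
    · have : s < i := by simpa using ht
      simpa using h1 s this
  · intro t ht
    rcases Fin.eq_zero_or_eq_succ t with rfl | ⟨s, rfl⟩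
    · exact absurd ht (by simp)
    · have : i < s := by simpa using ht
      simpa using h3 s this


/-- Split a walk that starts outside block `i` and ends inside it at the first entering edge. -/
lemma split {i : Fin k} :
    ∀ {w v : Fin (m + 1) → Fin k} (W : (sierpinskiGraph G (m + 1)).Walk w v),
      w 0 ≠ i → v 0 = i →
      ∃ (x y : Fin (m + 1) → Fin k) (M : (sierpinskiGraph G (m + 1)).Walk w x)
        (B : (sierpinskiGraph G (m + 1)).Walk y v),
        (sierpinskiGraph G (m + 1)).Adj x y ∧ x 0 ≠ i ∧ y 0 = i ∧
        M.length + 1 + B.length = W.length := by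
  intro w v W
  induction W with
  | nil => intro h1 h2; exact absurd h2 h1
  | @cons a b c h W' ih =>
    intro h1 h2
    by_cases hc : b 0 = i
    · exact ⟨a, b, SimpleGraph.Walk.nil, W', h, h1, hc, by
        rw [SimpleGraph.Walk.length_cons, SimpleGraph.Walk.length_nil]; omega⟩
    · obtain ⟨x, y, M, B, ha, hx, hy, hl⟩ := ih hc h2
      refine ⟨x, y, SimpleGraph.Walk.cons h M, B, ha, hx, hy, ?_⟩
      rw [SimpleGraph.Walk.length_cons, SimpleGraph.Walk.length_cons]
      omega

/-- The key invariant: given a walk `M` in `S^{m+1}` ending at a vertex of the form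
`c i^m`, we can produce two walks in `S^m`, one from `tail u'` and one from the
constant word on the first letter of `u'`, ending (in one of the two pairings) at the
constant words `c^m` and `i^m`, with total length at most `|M|`. -/
lemma lemU {i : Fin k} {u' v' : Fin (m + 1) → Fin k}
    (M : (sierpinskiGraph G (m + 1)).Walk u' v') (hv : ∀ t : Fin m, v' t.succ = i) :
    ∃ L1 L2, L1 + L2 ≤ M.length ∧
      ((Conn G m (Fin.tail u') (fun _ => v' 0) L1 ∧
          Conn G m (fun _ => u' 0) (fun _ => i) L2) ∨
        (Conn G m (Fin.tail u') (fun _ => i) L1 ∧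
          Conn G m (fun _ => u' 0) (fun _ => v' 0) L2)) := by
  induction M with
  | nil =>
    refine ⟨0, 0, by simp, Or.inr ⟨conn_of_eq ?_, conn_of_eq rfl⟩⟩
    funext t
    exact hv t
  | @cons a b c h M' ih =>
    obtain ⟨L1, L2, hL, hopt⟩ := ih hv
    by_cases hc : a 0 = b 0
    · have he := adj_tail h hc
      refine ⟨L1 + 1, L2, ?_, ?_⟩
      · rw [SimpleGraph.Walk.length_cons]; omega
      · rcases hopt with ⟨q1, q2⟩ | ⟨q1, q2⟩
        · exact Or.inl ⟨q1.cons he, conn_left (by rw [hc]) q2⟩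
        · exact Or.inr ⟨q1.cons he, conn_left (by rw [hc]) q2⟩
    · obtain ⟨hG, hrest⟩ := adj_cross h hc
      have htu : Fin.tail a = fun _ => b 0 := funext fun t => (hrest t).1
      have htb : Fin.tail b = fun _ => a 0 := funext fun t => (hrest t).2
      refine ⟨L2, L1, by rw [SimpleGraph.Walk.length_cons]; omega, ?_⟩
      rcases hopt with ⟨q1, q2⟩ | ⟨q1, q2⟩
      · exact Or.inr ⟨htu ▸ q2, conn_left htb q1⟩
      · exact Or.inl ⟨htu ▸ q2, conn_left htb q1⟩

/-- Main projection lemma: a walk in `S^{m+1}` between vertices with the same first letter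
projects to a walk of no greater length between the tails in `S^m`. -/
lemma lemP : ∀ (ℓ : ℕ) {u v : Fin (m + 1) → Fin k}
    (W : (sierpinskiGraph G (m + 1)).Walk u v), W.length ≤ ℓ → u 0 = v 0 →
    Conn G m (Fin.tail u) (Fin.tail v) W.length := by
  intro ℓ
  induction ℓ with
  | zero =>
    intro u v W hW h0
    have : u = v := W.eq_of_length_eq_zero (Nat.le_zero.mp hW)
    exact conn_of_eq (by rw [this])
  | succ ℓ ih =>
    intro u v W hW h0
    cases W with
    | nil => exact conn_of_eq rfl
    | @cons _ b _ h W' =>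
      rw [SimpleGraph.Walk.length_cons] at hW ⊢
      by_cases hc : b 0 = u 0
      · have hproj := ih W' (by omega) (hc.trans h0)
        have he := adj_tail h hc.symm
        obtain ⟨Q, hQ⟩ := hproj
        exact ⟨SimpleGraph.Walk.cons he Q, by rw [SimpleGraph.Walk.length_cons]; omega⟩
      · obtain ⟨hG, hrest⟩ := adj_cross h fun e => hc e.symm
        have hta : Fin.tail u = fun _ => b 0 := funext fun t => (hrest t).1
        obtain ⟨x, y, M, B, ha2, hx, hy, hlen⟩ :=
          split (i := v 0) W' (fun e => hc (e.trans h0.symm)) rfl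
        obtain ⟨hG2, hrest2⟩ := adj_cross ha2 (fun e => hx (e.trans hy))
        have hxv : ∀ t : Fin m, x t.succ = v 0 := fun t => (hrest2 t).1.trans hy
        have hty : Fin.tail y = fun _ => x 0 := funext fun t => (hrest2 t).2
        obtain ⟨L1, L2, hL, hopt⟩ := lemU (i := v 0) M hxv
        have hB : Conn G m (fun _ => x 0) (Fin.tail v) B.length :=
          conn_left hty (ih B (by omega) hy)
        have htb : Fin.tail b = fun _ => v 0 :=
          funext fun t => ((hrest t).2).trans h0
        rcases hopt with ⟨q1, q2⟩ | ⟨q1, q2⟩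
        · -- q1 : tail b → const (x 0), q2 : const (b 0) → const (v 0)
          refine Conn.mono (show L2 + L1 + B.length ≤ W'.length + 1 by omega) ?_
          exact conn_left hta.symm ((q2.trans (conn_left htb q1)).trans hB)
        · -- q1 : tail b → const (v 0), q2 : const (b 0) → const (x 0)
          refine Conn.mono (show L2 + B.length ≤ W'.length + 1 by omega) ?_
          exact conn_left hta.symm (q2.trans hB)

/-- Prepending a fixed letter is a graph homomorphism `S^m → S^{m+1}`. -/
def consHom (G : SimpleGraph (Fin k)) (m : ℕ) (j : Fin k) :
    sierpinskiGraph G m →g sierpinskiGraph G (m + 1) where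
  toFun := fun w => Fin.cons j w
  map_rel' := fun h => adj_cons j h

end SierpAux

/-- Statement for `n = m + 1 ≥ 2`: prepending a fixed letter `j` preserves distances,
i.e. `d_{S^{n-1}_G}(u, v) = d_{S^n_G}(ju, jv)`. -/
theorem stmt18 (k : ℕ) (G : SimpleGraph (Fin k)) (m : ℕ) (hm : 1 ≤ m) (j : Fin k)
    (u v : Fin m → Fin k) :
    (sierpinskiGraph G m).edist u v =
      (sierpinskiGraph G (m + 1)).edist (Fin.cons j u) (Fin.cons j v) := by
  apply le_antisymm
  · rcases eq_or_ne ((sierpinskiGraph G (m + 1)).edist (Fin.cons j u) (Fin.cons j v)) ⊤ with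
      h | h
    · rw [h]; exact le_top
    · obtain ⟨p, hp⟩ := SimpleGraph.exists_walk_of_edist_ne_top h
      have h0 : (Fin.cons j u : Fin (m + 1) → Fin k) 0 = (Fin.cons j v : Fin (m + 1) → Fin k) 0 := by simp
      have hconn := SierpAux.lemP p.length p le_rfl h0
      rw [Fin.tail_cons, Fin.tail_cons] at hconn
      obtain ⟨Q, hQ⟩ := hconn
      calc (sierpinskiGraph G m).edist u v ≤ Q.length := SimpleGraph.edist_le Q
        _ ≤ (p.length : ℕ∞) := by exact_mod_cast hQ
        _ = _ := hp
  · rcases eq_or_ne ((sierpinskiGraph G m).edist u v) ⊤ with h | h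
    · rw [h]; exact le_top
    · obtain ⟨p, hp⟩ := SimpleGraph.exists_walk_of_edist_ne_top h
      calc (sierpinskiGraph G (m + 1)).edist (Fin.cons j u) (Fin.cons j v)
          ≤ (p.map (SierpAux.consHom G m j)).length :=
            SimpleGraph.edist_le _
        _ = (p.length : ℕ∞) := by rw [SimpleGraph.Walk.length_map]
        _ = _ := hp
end
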